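/- Let π be an unsigned permutation of size n with b_τ(π) transposition breakpoints, let π' = (+π_1 +π_2 … +π_n) be the signed permutation obtained by giving every element of π the sign '+', and let w_ρ, w_τ be positive weights with w_τ/w_ρ ≤ 3/2. Then there exists a sequence S of transpositions transforming π into ι^n with 3·|S| = b_τ(π) if and only if 3·d^w_{M6}(π') ≤ w_τ · b_τ(π), where M6 = {reversals, transpositions, inverse transpositions, revrevs} acts on signed permutations. -/

import Mathlib

/-- The four kinds of rearrangement operations considered:
reversals, transpositions, inverse transpositions and revrevs. -/
inductive RearrOp : Type
  | rev
  | transp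
  | invtransp
  | revrev
deriving DecidableEq

/-- `π` is (the extended version of) a signed permutation of size `n`:
`π 0 = +0`, `π (n+1) = +(n+1)`, and on positions `1, …, n` the values have pairwise
distinct absolute values lying in `{1, …, n}`. -/
def IsSPerm (n : ℕ) (π : ℕ → ℤ) : Prop :=
  π 0 = 0 ∧ π (n + 1) = (n : ℤ) + 1 ∧
  (∀ i : ℕ, 1 ≤ i → i ≤ n → 1 ≤ |π i| ∧ |π i| ≤ (n : ℤ)) ∧
  (∀ i j : ℕ, 1 ≤ i → i ≤ n → 1 ≤ j → j ≤ n → |π i| = |π j| → i = j)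

/-- `π` is (the extended version of) an unsigned permutation of size `n`. -/
def IsUPerm (n : ℕ) (π : ℕ → ℕ) : Prop :=
  π 0 = 0 ∧ π (n + 1) = n + 1 ∧
  (∀ i : ℕ, 1 ≤ i → i ≤ n → 1 ≤ π i ∧ π i ≤ n) ∧
  (∀ i j : ℕ, 1 ≤ i → i ≤ n → 1 ≤ j → j ≤ n → π i = π j → i = j)

/-- Signed reversal `ρ(i,j)`, `1 ≤ i ≤ j ≤ n`: replaces `(π_i … π_j)` by `(−π_j … −π_i)`. -/
def SRev (n : ℕ) (π π' : ℕ → ℤ) : Prop :=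
  ∃ i j : ℕ, 1 ≤ i ∧ i ≤ j ∧ j ≤ n ∧
    (∀ p : ℕ, i ≤ p → p ≤ j → π' p = - π (i + j - p)) ∧
    (∀ p : ℕ, p < i ∨ j < p → π' p = π p)

/-- Transposition `τ(i,j,k)`, `1 ≤ i < j < k ≤ n+1`: exchanges the adjacent segments
`(π_i … π_{j−1})` and `(π_j … π_{k−1})`. -/
def STransp (n : ℕ) (π π' : ℕ → ℤ) : Prop :=
  ∃ i j k : ℕ, 1 ≤ i ∧ i < j ∧ j < k ∧ k ≤ n + 1 ∧
    (∀ p : ℕ, i ≤ p → p < i + (k - j) → π' p = π (p + (j - i))) ∧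
    (∀ p : ℕ, i + (k - j) ≤ p → p < k → π' p = π (p - (k - j))) ∧
    (∀ p : ℕ, p < i ∨ k ≤ p → π' p = π p)

/-- Signed inverse transposition (type 1 or type 2): exchanges the two adjacent segments
`(π_i … π_{j−1})` and `(π_j … π_{k−1})` and additionally reverses (and negates) one of them. -/
def SInvTransp (n : ℕ) (π π' : ℕ → ℤ) : Prop :=
  ∃ i j k : ℕ, 1 ≤ i ∧ i < j ∧ j < k ∧ k ≤ n + 1 ∧
    (((∀ p : ℕ, i ≤ p → p < i + (k - j) → π' p = π (p + (j - i))) ∧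
      (∀ p : ℕ, i + (k - j) ≤ p → p < k → π' p = - π (i + k - 1 - p))) ∨
     ((∀ p : ℕ, i ≤ p → p < i + (k - j) → π' p = - π (i + k - 1 - p)) ∧
      (∀ p : ℕ, i + (k - j) ≤ p → p < k → π' p = π (p - (k - j))))) ∧
    (∀ p : ℕ, p < i ∨ k ≤ p → π' p = π p)

/-- Signed revrev `ρρ(i,j,k)`: reverses (and negates) each of the two adjacent segments
`(π_i … π_{j−1})` and `(π_j … π_{k−1})` in place, without exchanging them. -/
def SRevRev (n : ℕ) (π π' : ℕ → ℤ) : Prop :=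
  ∃ i j k : ℕ, 1 ≤ i ∧ i < j ∧ j < k ∧ k ≤ n + 1 ∧
    (∀ p : ℕ, i ≤ p → p < j → π' p = - π (i + j - 1 - p)) ∧
    (∀ p : ℕ, j ≤ p → p < k → π' p = - π (j + k - 1 - p)) ∧
    (∀ p : ℕ, p < i ∨ k ≤ p → π' p = π p)

/-- Unsigned reversal `ρ(i,j)`. -/
def URev (n : ℕ) (π π' : ℕ → ℕ) : Prop :=
  ∃ i j : ℕ, 1 ≤ i ∧ i ≤ j ∧ j ≤ n ∧
    (∀ p : ℕ, i ≤ p → p ≤ j → π' p = π (i + j - p)) ∧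
    (∀ p : ℕ, p < i ∨ j < p → π' p = π p)

/-- Unsigned transposition `τ(i,j,k)`. -/
def UTransp (n : ℕ) (π π' : ℕ → ℕ) : Prop :=
  ∃ i j k : ℕ, 1 ≤ i ∧ i < j ∧ j < k ∧ k ≤ n + 1 ∧
    (∀ p : ℕ, i ≤ p → p < i + (k - j) → π' p = π (p + (j - i))) ∧
    (∀ p : ℕ, i + (k - j) ≤ p → p < k → π' p = π (p - (k - j))) ∧
    (∀ p : ℕ, p < i ∨ k ≤ p → π' p = π p)

/-- Unsigned inverse transposition (type 1 or type 2). -/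
def UInvTransp (n : ℕ) (π π' : ℕ → ℕ) : Prop :=
  ∃ i j k : ℕ, 1 ≤ i ∧ i < j ∧ j < k ∧ k ≤ n + 1 ∧
    (((∀ p : ℕ, i ≤ p → p < i + (k - j) → π' p = π (p + (j - i))) ∧
      (∀ p : ℕ, i + (k - j) ≤ p → p < k → π' p = π (i + k - 1 - p))) ∨
     ((∀ p : ℕ, i ≤ p → p < i + (k - j) → π' p = π (i + k - 1 - p)) ∧
      (∀ p : ℕ, i + (k - j) ≤ p → p < k → π' p = π (p - (k - j))))) ∧
    (∀ p : ℕ, p < i ∨ k ≤ p → π' p = π p)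

/-- Unsigned revrev `ρρ(i,j,k)`. -/
def URevRev (n : ℕ) (π π' : ℕ → ℕ) : Prop :=
  ∃ i j k : ℕ, 1 ≤ i ∧ i < j ∧ j < k ∧ k ≤ n + 1 ∧
    (∀ p : ℕ, i ≤ p → p < j → π' p = π (i + j - 1 - p)) ∧
    (∀ p : ℕ, j ≤ p → p < k → π' p = π (j + k - 1 - p)) ∧
    (∀ p : ℕ, p < i ∨ k ≤ p → π' p = π p)

def sOpRel (n : ℕ) : RearrOp → (ℕ → ℤ) → (ℕ → ℤ) → Prop
  | RearrOp.rev => SRev n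
  | RearrOp.transp => STransp n
  | RearrOp.invtransp => SInvTransp n
  | RearrOp.revrev => SRevRev n

def uOpRel (n : ℕ) : RearrOp → (ℕ → ℕ) → (ℕ → ℕ) → Prop
  | RearrOp.rev => URev n
  | RearrOp.transp => UTransp n
  | RearrOp.invtransp => UInvTransp n
  | RearrOp.revrev => URevRev n

/-- The list of operations `l` transforms the signed permutation `π` into the identity. -/
def SSorts (n : ℕ) : List RearrOp → (ℕ → ℤ) → Prop
  | [], π => ∀ p : ℕ, p ≤ n + 1 → π p = (p : ℤ)
  | op :: l, π => ∃ π' : ℕ → ℤ, sOpRel n op π π' ∧ SSorts n l π'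

/-- The list of operations `l` transforms the unsigned permutation `π` into the identity. -/
def USorts (n : ℕ) : List RearrOp → (ℕ → ℕ) → Prop
  | [], π => ∀ p : ℕ, p ≤ n + 1 → π p = p
  | op :: l, π => ∃ π' : ℕ → ℕ, uOpRel n op π π' ∧ USorts n l π'

/-- A sequence of `s` (unsigned) transpositions transforms `π` into the identity. -/
def UTranspSorts (n : ℕ) : ℕ → (ℕ → ℕ) → Prop
  | 0, π => ∀ p : ℕ, p ≤ n + 1 → π p = p
  | s + 1, π => ∃ π' : ℕ → ℕ, UTransp n π π' ∧ UTranspSorts n s π'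

/-- The cost of an operation: `wr` for a reversal, `wt` for a transposition,
inverse transposition or revrev. -/
noncomputable def opCost (wr wt : ℝ) (op : RearrOp) : ENNReal :=
  if op = RearrOp.rev then ENNReal.ofReal wr else ENNReal.ofReal wt

/-- The total cost of a sequence of operations. -/
noncomputable def seqCost (wr wt : ℝ) (l : List RearrOp) : ENNReal :=
  (l.map (opCost wr wt)).sum

/-- The weighted distance `d^w_M(π)` for a signed permutation `π`: the minimum total cost
of a sequence of operations from the model `M` transforming `π` into the identity
(`∞` if no such sequence exists). -/
noncomputable def sWDist (n : ℕ) (M : Set RearrOp) (wr wt : ℝ) (π : ℕ → ℤ) : ENNReal :=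
  sInf {c : ENNReal |
    ∃ l : List RearrOp, (∀ op ∈ l, op ∈ M) ∧ SSorts n l π ∧ c = seqCost wr wt l}

/-- The weighted distance `d^w_M(π)` for an unsigned permutation `π`. -/
noncomputable def uWDist (n : ℕ) (M : Set RearrOp) (wr wt : ℝ) (π : ℕ → ℕ) : ENNReal :=
  sInf {c : ENNReal |
    ∃ l : List RearrOp, (∀ op ∈ l, op ∈ M) ∧ USorts n l π ∧ c = seqCost wr wt l}

/-- `b(π)`: number of (signed) breakpoints of the signed permutation `π`. -/
def bS (n : ℕ) (π : ℕ → ℤ) : ℕ :=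
  ((Finset.range (n + 1)).filter (fun i => π (i + 1) - π i ≠ 1)).card

/-- `b(π)`: number of unsigned-reversal breakpoints, i.e. pairs with `|π_{i+1} − π_i| ≠ 1`. -/
def bU (n : ℕ) (π : ℕ → ℕ) : ℕ :=
  ((Finset.range (n + 1)).filter
    (fun i => ¬ (π (i + 1) = π i + 1 ∨ π i = π (i + 1) + 1))).card

/-- `b_τ(π)`: number of transposition breakpoints, i.e. pairs with `π_{i+1} − π_i ≠ 1`. -/
def bTU (n : ℕ) (π : ℕ → ℕ) : ℕ :=
  ((Finset.range (n + 1)).filter (fun i => π (i + 1) ≠ π i + 1)).card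

def M1 : Set RearrOp := {RearrOp.transp, RearrOp.invtransp}
def M2 : Set RearrOp := {RearrOp.rev, RearrOp.transp, RearrOp.invtransp}
def M3 : Set RearrOp := {RearrOp.transp, RearrOp.revrev}
def M4 : Set RearrOp := {RearrOp.rev, RearrOp.transp, RearrOp.revrev}
def M5 : Set RearrOp := {RearrOp.transp, RearrOp.invtransp, RearrOp.revrev}
def M6 : Set RearrOp := {RearrOp.rev, RearrOp.transp, RearrOp.invtransp, RearrOp.revrev}


/-! ### Auxiliary lemmas -/

section Aux

open Finset in
lemma bS_helper (n : ℕ) (π π₁ : ℕ → ℤ) (E F : Finset ℕ) (g : ℕ → ℕ)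
    (hg : ∀ p, p < n+1 → p ∉ E → π (p+1) - π p ≠ 1 →
      g p < n+1 ∧ g p ∉ F ∧ π₁ (g p + 1) - π₁ (g p) ≠ 1)
    (hinj : ∀ p, p < n+1 → p ∉ E → π (p+1) - π p ≠ 1 →
      ∀ q, q < n+1 → q ∉ E → π (q+1) - π q ≠ 1 → g p = g q → p = q)
    (hF : ∀ e ∈ F, e < n+1 ∧ π₁ (e+1) - π₁ e ≠ 1) :
    bS n π + F.card ≤ bS n π₁ + E.card := by
  classical
  unfold bS
  set A := (range (n+1)).filter (fun i => π (i+1) - π i ≠ 1) with hA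
  set B := (range (n+1)).filter (fun i => π₁ (i+1) - π₁ i ≠ 1) with hB
  have h1 : A.card ≤ (A \ E).card + E.card := card_le_card_sdiff_add_card
  have hmem : ∀ p ∈ A \ E, g p ∈ B ∧ g p ∉ F := by
    intro p hp
    simp only [mem_sdiff, hA, mem_filter, mem_range] at hp
    obtain ⟨⟨hp1, hp2⟩, hp3⟩ := hp
    obtain ⟨h4, h5, h6⟩ := hg p hp1 hp3 hp2
    refine ⟨?_, h5⟩
    simp only [hB, mem_filter, mem_range]
    exact ⟨h4, h6⟩
  have hdisj : Disjoint ((A \ E).image g) F := by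
    rw [disjoint_left]
    intro x hx
    obtain ⟨p, hp, rfl⟩ := mem_image.1 hx
    exact (hmem p hp).2
  have h2 : ((A \ E).image g ∪ F).card ≤ B.card := by
    apply card_le_card
    intro x hx
    rcases mem_union.1 hx with hx | hx
    · obtain ⟨p, hp, rfl⟩ := mem_image.1 hx
      exact (hmem p hp).1
    · have := hF x hx
      simp only [hB, mem_filter, mem_range]
      exact this
  have h3 : ((A \ E).image g).card = (A \ E).card := by
    apply card_image_of_injOn
    intro p hp q hq heq
    simp only [coe_sdiff, Set.mem_diff, mem_coe, hA, mem_filter, mem_range] at hp hq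
    exact hinj p hp.1.1 hp.2 hp.1.2 q hq.1.1 hq.2 hq.1.2 heq
  have h4 : ((A \ E).image g ∪ F).card = ((A \ E).image g).card + F.card :=
    card_union_of_disjoint hdisj
  omega

lemma card3 (a b c : ℕ) : ({a,b,c} : Finset ℕ).card ≤ 3 := by
  refine le_trans (Finset.card_insert_le _ _) ?_
  have h2 := Finset.card_insert_le b ({c} : Finset ℕ)
  simp only [Finset.card_singleton] at h2
  omega

lemma rev_bS (n : ℕ) (π π₁ : ℕ → ℤ) (i j : ℕ)
    (hi : 1 ≤ i) (hij : i ≤ j) (hj : j ≤ n)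
    (h1 : ∀ p, i ≤ p → p ≤ j → π₁ p = - π (i + j - p))
    (h2 : ∀ p, p < i ∨ j < p → π₁ p = π p)
    (F : Finset ℕ) (hFsub : F ⊆ {i - 1, j})
    (hF : ∀ e ∈ F, π₁ (e+1) - π₁ e ≠ 1) :
    bS n π + F.card ≤ bS n π₁ + 2 := by
  have hE : ({i-1, j} : Finset ℕ).card ≤ 2 := by
    apply le_trans (Finset.card_insert_le _ _); simp
  have key := bS_helper n π π₁ {i-1, j} F
      (fun p => if i ≤ p ∧ p < j then i + j - 1 - p else p) ?_ ?_ ?_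
  · omega
  · intro p hp hpE hbp
    simp only [Finset.mem_insert, Finset.mem_singleton] at hpE
    push_neg at hpE
    by_cases hc : i ≤ p ∧ p < j
    · simp only [if_pos hc]
      have hx1 : i + j - (i + j - 1 - p) = p + 1 := by omega
      have hx2 : i + j - (i + j - 1 - p + 1) = p := by omega
      have e1 : π₁ (i + j - 1 - p) = - π (p + 1) := by
        rw [h1 _ (by omega) (by omega), hx1]
      have e2 : π₁ (i + j - 1 - p + 1) = - π p := by
        rw [h1 _ (by omega) (by omega), hx2]
      refine ⟨by omega, ?_, ?_⟩
      · intro hmem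
        have := hFsub hmem
        simp only [Finset.mem_insert, Finset.mem_singleton] at this
        omega
      · rw [e1, e2]; intro h; apply hbp; linarith
    · simp only [if_neg hc]
      have hcase : p + 1 < i ∨ j < p := by omega
      have e1 : π₁ p = π p := h2 p (by omega)
      have e2 : π₁ (p + 1) = π (p + 1) := h2 (p+1) (by omega)
      refine ⟨by omega, ?_, by rw [e1, e2]; exact hbp⟩
      intro hmem
      have := hFsub hmem
      simp only [Finset.mem_insert, Finset.mem_singleton] at this
      omega
  · intro p hp hpE hbp q hq hqE hbq heq
    simp only [Finset.mem_insert, Finset.mem_singleton] at hpE hqE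
    push_neg at hpE hqE
    split_ifs at heq <;> omega
  · intro e he
    have := hFsub he
    simp only [Finset.mem_insert, Finset.mem_singleton] at this
    exact ⟨by omega, hF e he⟩

lemma transp_bS (n : ℕ) (π π₁ : ℕ → ℤ) (i j k : ℕ)
    (hi : 1 ≤ i) (hij : i < j) (hjk : j < k) (hk : k ≤ n + 1)
    (hA : ∀ p, i ≤ p → p < i + (k - j) → π₁ p = π (p + (j - i)))
    (hB : ∀ p, i + (k - j) ≤ p → p < k → π₁ p = π (p - (k - j)))
    (hC : ∀ p, p < i ∨ k ≤ p → π₁ p = π p) :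
    bS n π ≤ bS n π₁ + 3 := by
  have key := bS_helper n π π₁ {i-1, j-1, k-1} (∅ : Finset ℕ)
      (fun q => if j ≤ q ∧ q + 2 ≤ k then q - (j - i)
        else if i ≤ q ∧ q + 2 ≤ j then q + (k - j) else q) ?_ ?_ ?_
  · have := card3 (i-1) (j-1) (k-1); simp only [Finset.card_empty] at key; omega
  · intro q hq hqE hbp
    simp only [Finset.mem_insert, Finset.mem_singleton] at hqE
    push_neg at hqE
    by_cases c1 : j ≤ q ∧ q + 2 ≤ k
    · simp only [if_pos c1]
      have hx1 : q - (j - i) + (j - i) = q := by omega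
      have hx2 : q - (j - i) + 1 + (j - i) = q + 1 := by omega
      have e1 : π₁ (q - (j - i)) = π q := by
        rw [hA _ (by omega) (by omega), hx1]
      have e2 : π₁ (q - (j - i) + 1) = π (q + 1) := by
        rw [hA _ (by omega) (by omega), hx2]
      exact ⟨by omega, by simp, by rw [e1, e2]; exact hbp⟩
    · by_cases c2 : i ≤ q ∧ q + 2 ≤ j
      · simp only [if_neg c1, if_pos c2]
        have hx1 : q + (k - j) - (k - j) = q := by omega
        have hx2 : q + (k - j) + 1 - (k - j) = q + 1 := by omega
        have e1 : π₁ (q + (k - j)) = π q := by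
          rw [hB _ (by omega) (by omega), hx1]
        have e2 : π₁ (q + (k - j) + 1) = π (q + 1) := by
          rw [hB _ (by omega) (by omega), hx2]
        exact ⟨by omega, by simp, by rw [e1, e2]; exact hbp⟩
      · simp only [if_neg c1, if_neg c2]
        have hcase : q + 1 < i ∨ k ≤ q := by omega
        have e1 : π₁ q = π q := hC q (by omega)
        have e2 : π₁ (q + 1) = π (q + 1) := hC (q+1) (by omega)
        exact ⟨by omega, by simp, by rw [e1, e2]; exact hbp⟩
  · intro p hp hpE hbp q hq hqE hbq heq
    simp only [Finset.mem_insert, Finset.mem_singleton] at hpE hqE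
    push_neg at hpE hqE
    split_ifs at heq <;> omega
  · intro e he
    simp at he

lemma invtransp1_bS (n : ℕ) (π π₁ : ℕ → ℤ) (i j k : ℕ)
    (hi : 1 ≤ i) (hij : i < j) (hjk : j < k) (hk : k ≤ n + 1)
    (hA : ∀ p, i ≤ p → p < i + (k - j) → π₁ p = π (p + (j - i)))
    (hB : ∀ p, i + (k - j) ≤ p → p < k → π₁ p = - π (i + k - 1 - p))
    (hC : ∀ p, p < i ∨ k ≤ p → π₁ p = π p)
    (F : Finset ℕ) (hFsub : F ⊆ {i + (k - j) - 1})
    (hF : ∀ e ∈ F, π₁ (e+1) - π₁ e ≠ 1) :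
    bS n π + F.card ≤ bS n π₁ + 3 := by
  have key := bS_helper n π π₁ {i-1, j-1, k-1} F
      (fun q => if j ≤ q ∧ q + 2 ≤ k then q - (j - i)
        else if i ≤ q ∧ q + 2 ≤ j then i + k - 2 - q else q) ?_ ?_ ?_
  · have := card3 (i-1) (j-1) (k-1); omega
  · intro q hq hqE hbp
    simp only [Finset.mem_insert, Finset.mem_singleton] at hqE
    push_neg at hqE
    have hnotF : ∀ m, m ≠ i + (k - j) - 1 → m ∉ F := by
      intro m hm hmem
      have := hFsub hmem
      simp only [Finset.mem_singleton] at this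
      exact hm this
    by_cases c1 : j ≤ q ∧ q + 2 ≤ k
    · simp only [if_pos c1]
      have hx1 : q - (j - i) + (j - i) = q := by omega
      have hx2 : q - (j - i) + 1 + (j - i) = q + 1 := by omega
      have e1 : π₁ (q - (j - i)) = π q := by
        rw [hA _ (by omega) (by omega), hx1]
      have e2 : π₁ (q - (j - i) + 1) = π (q + 1) := by
        rw [hA _ (by omega) (by omega), hx2]
      exact ⟨by omega, hnotF _ (by omega), by rw [e1, e2]; exact hbp⟩
    · by_cases c2 : i ≤ q ∧ q + 2 ≤ j
      · simp only [if_neg c1, if_pos c2]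
        have hx1 : i + k - 1 - (i + k - 2 - q) = q + 1 := by omega
        have hx2 : i + k - 1 - (i + k - 2 - q + 1) = q := by omega
        have e1 : π₁ (i + k - 2 - q) = - π (q + 1) := by
          rw [hB _ (by omega) (by omega), hx1]
        have e2 : π₁ (i + k - 2 - q + 1) = - π q := by
          rw [hB _ (by omega) (by omega), hx2]
        refine ⟨by omega, hnotF _ (by omega), ?_⟩
        rw [e1, e2]; intro h; apply hbp; linarith
      · simp only [if_neg c1, if_neg c2]
        have hcase : q + 1 < i ∨ k ≤ q := by omega
        have e1 : π₁ q = π q := hC q (by omega)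
        have e2 : π₁ (q + 1) = π (q + 1) := hC (q+1) (by omega)
        exact ⟨by omega, hnotF _ (by omega), by rw [e1, e2]; exact hbp⟩
  · intro p hp hpE hbp q hq hqE hbq heq
    simp only [Finset.mem_insert, Finset.mem_singleton] at hpE hqE
    push_neg at hpE hqE
    split_ifs at heq <;> omega
  · intro e he
    have := hFsub he
    simp only [Finset.mem_singleton] at this
    exact ⟨by omega, hF e he⟩

lemma invtransp2_bS (n : ℕ) (π π₁ : ℕ → ℤ) (i j k : ℕ)
    (hi : 1 ≤ i) (hij : i < j) (hjk : j < k) (hk : k ≤ n + 1)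
    (hA : ∀ p, i ≤ p → p < i + (k - j) → π₁ p = - π (i + k - 1 - p))
    (hB : ∀ p, i + (k - j) ≤ p → p < k → π₁ p = π (p - (k - j)))
    (hC : ∀ p, p < i ∨ k ≤ p → π₁ p = π p)
    (F : Finset ℕ) (hFsub : F ⊆ {i - 1})
    (hF : ∀ e ∈ F, π₁ (e+1) - π₁ e ≠ 1) :
    bS n π + F.card ≤ bS n π₁ + 3 := by
  have key := bS_helper n π π₁ {i-1, j-1, k-1} F
      (fun q => if i ≤ q ∧ q + 2 ≤ j then q + (k - j)
        else if j ≤ q ∧ q + 2 ≤ k then i + k - 2 - q else q) ?_ ?_ ?_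
  · have := card3 (i-1) (j-1) (k-1); omega
  · intro q hq hqE hbp
    simp only [Finset.mem_insert, Finset.mem_singleton] at hqE
    push_neg at hqE
    have hnotF : ∀ m, m ≠ i - 1 → m ∉ F := by
      intro m hm hmem
      have := hFsub hmem
      simp only [Finset.mem_singleton] at this
      exact hm this
    by_cases c1 : i ≤ q ∧ q + 2 ≤ j
    · simp only [if_pos c1]
      have hx1 : q + (k - j) - (k - j) = q := by omega
      have hx2 : q + (k - j) + 1 - (k - j) = q + 1 := by omega
      have e1 : π₁ (q + (k - j)) = π q := by
        rw [hB _ (by omega) (by omega), hx1]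
      have e2 : π₁ (q + (k - j) + 1) = π (q + 1) := by
        rw [hB _ (by omega) (by omega), hx2]
      exact ⟨by omega, hnotF _ (by omega), by rw [e1, e2]; exact hbp⟩
    · by_cases c2 : j ≤ q ∧ q + 2 ≤ k
      · simp only [if_neg c1, if_pos c2]
        have hx1 : i + k - 1 - (i + k - 2 - q) = q + 1 := by omega
        have hx2 : i + k - 1 - (i + k - 2 - q + 1) = q := by omega
        have e1 : π₁ (i + k - 2 - q) = - π (q + 1) := by
          rw [hA _ (by omega) (by omega), hx1]
        have e2 : π₁ (i + k - 2 - q + 1) = - π q := by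
          rw [hA _ (by omega) (by omega), hx2]
        refine ⟨by omega, hnotF _ (by omega), ?_⟩
        rw [e1, e2]; intro h; apply hbp; linarith
      · simp only [if_neg c1, if_neg c2]
        have hcase : q + 1 < i ∨ k ≤ q := by omega
        have e1 : π₁ q = π q := hC q (by omega)
        have e2 : π₁ (q + 1) = π (q + 1) := hC (q+1) (by omega)
        exact ⟨by omega, hnotF _ (by omega), by rw [e1, e2]; exact hbp⟩
  · intro p hp hpE hbp q hq hqE hbq heq
    simp only [Finset.mem_insert, Finset.mem_singleton] at hpE hqE
    push_neg at hpE hqE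
    split_ifs at heq <;> omega
  · intro e he
    have := hFsub he
    simp only [Finset.mem_singleton] at this
    exact ⟨by omega, hF e he⟩

lemma revrev_bS (n : ℕ) (π π₁ : ℕ → ℤ) (i j k : ℕ)
    (hi : 1 ≤ i) (hij : i < j) (hjk : j < k) (hk : k ≤ n + 1)
    (hA : ∀ p, i ≤ p → p < j → π₁ p = - π (i + j - 1 - p))
    (hB : ∀ p, j ≤ p → p < k → π₁ p = - π (j + k - 1 - p))
    (hC : ∀ p, p < i ∨ k ≤ p → π₁ p = π p)
    (F : Finset ℕ) (hFsub : F ⊆ {i - 1})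
    (hF : ∀ e ∈ F, π₁ (e+1) - π₁ e ≠ 1) :
    bS n π + F.card ≤ bS n π₁ + 3 := by
  have key := bS_helper n π π₁ {i-1, j-1, k-1} F
      (fun q => if i ≤ q ∧ q + 2 ≤ j then i + j - 2 - q
        else if j ≤ q ∧ q + 2 ≤ k then j + k - 2 - q else q) ?_ ?_ ?_
  · have := card3 (i-1) (j-1) (k-1); omega
  · intro q hq hqE hbp
    simp only [Finset.mem_insert, Finset.mem_singleton] at hqE
    push_neg at hqE
    have hnotF : ∀ m, m ≠ i - 1 → m ∉ F := by
      intro m hm hmem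
      have := hFsub hmem
      simp only [Finset.mem_singleton] at this
      exact hm this
    by_cases c1 : i ≤ q ∧ q + 2 ≤ j
    · simp only [if_pos c1]
      have hx1 : i + j - 1 - (i + j - 2 - q) = q + 1 := by omega
      have hx2 : i + j - 1 - (i + j - 2 - q + 1) = q := by omega
      have e1 : π₁ (i + j - 2 - q) = - π (q + 1) := by
        rw [hA _ (by omega) (by omega), hx1]
      have e2 : π₁ (i + j - 2 - q + 1) = - π q := by
        rw [hA _ (by omega) (by omega), hx2]
      refine ⟨by omega, hnotF _ (by omega), ?_⟩
      rw [e1, e2]; intro h; apply hbp; linarith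
    · by_cases c2 : j ≤ q ∧ q + 2 ≤ k
      · simp only [if_neg c1, if_pos c2]
        have hx1 : j + k - 1 - (j + k - 2 - q) = q + 1 := by omega
        have hx2 : j + k - 1 - (j + k - 2 - q + 1) = q := by omega
        have e1 : π₁ (j + k - 2 - q) = - π (q + 1) := by
          rw [hB _ (by omega) (by omega), hx1]
        have e2 : π₁ (j + k - 2 - q + 1) = - π q := by
          rw [hB _ (by omega) (by omega), hx2]
        refine ⟨by omega, hnotF _ (by omega), ?_⟩
        rw [e1, e2]; intro h; apply hbp; linarith
      · simp only [if_neg c1, if_neg c2]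
        have hcase : q + 1 < i ∨ k ≤ q := by omega
        have e1 : π₁ q = π q := hC q (by omega)
        have e2 : π₁ (q + 1) = π (q + 1) := hC (q+1) (by omega)
        exact ⟨by omega, hnotF _ (by omega), by rw [e1, e2]; exact hbp⟩
  · intro p hp hpE hbp q hq hqE hbq heq
    simp only [Finset.mem_insert, Finset.mem_singleton] at hpE hqE
    push_neg at hpE hqE
    split_ifs at heq <;> omega
  · intro e he
    have := hFsub he
    simp only [Finset.mem_singleton] at this
    exact ⟨by omega, hF e he⟩

/-- real-valued cost of a sequence. -/
noncomputable def rCost (wr wt : ℝ) (l : List RearrOp) : ℝ :=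
  (l.map (fun op => if op = RearrOp.rev then wr else wt)).sum

lemma rCost_nil (wr wt : ℝ) : rCost wr wt [] = 0 := rfl

lemma rCost_cons (wr wt : ℝ) (op : RearrOp) (l : List RearrOp) :
    rCost wr wt (op :: l) = (if op = RearrOp.rev then wr else wt) + rCost wr wt l := by
  simp [rCost]

lemma rCost_nonneg (wr wt : ℝ) (hwr : 0 ≤ wr) (hwt : 0 ≤ wt) (l : List RearrOp) :
    0 ≤ rCost wr wt l := by
  apply List.sum_nonneg
  intro x hx
  simp only [List.mem_map] at hx
  obtain ⟨op, _, rfl⟩ := hx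
  split_ifs <;> assumption

lemma seqCost_eq_ofReal (wr wt : ℝ) (hwr : 0 ≤ wr) (hwt : 0 ≤ wt) (l : List RearrOp) :
    seqCost wr wt l = ENNReal.ofReal (rCost wr wt l) := by
  induction l with
  | nil => simp [seqCost, rCost]
  | cons op l ih =>
    have hop : opCost wr wt op = ENNReal.ofReal (if op = RearrOp.rev then wr else wt) := by
      unfold opCost; split_ifs <;> rfl
    have hnn : 0 ≤ (if op = RearrOp.rev then wr else wt) := by split_ifs <;> assumption
    simp only [seqCost, List.map_cons, List.sum_cons] at *
    rw [ih, hop, ← ENNReal.ofReal_add hnn (rCost_nonneg wr wt hwr hwt l), rCost_cons]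

lemma bS_cast (n : ℕ) (π : ℕ → ℕ) : bS n (fun p => ((π p : ℕ) : ℤ)) = bTU n π := by
  unfold bS bTU
  congr 1
  apply Finset.filter_congr
  intro x _
  show (((π (x+1) : ℕ) : ℤ) - ((π x : ℕ) : ℤ) ≠ 1) ↔ (π (x + 1) ≠ π x + 1)
  omega

lemma bS_id (n : ℕ) (π : ℕ → ℤ) (h : ∀ p, p ≤ n + 1 → π p = (p : ℤ)) : bS n π = 0 := by
  unfold bS
  rw [Finset.card_eq_zero, Finset.filter_eq_empty_iff]
  intro x hx
  simp only [Finset.mem_range] at hx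
  rw [h x (by omega), h (x+1) (by omega)]
  push_cast
  simp

/-- Lower bound: any sorting sequence of a signed permutation costs at least `wt·bS/3`. -/
lemma cost_lower_bound (n : ℕ) (wr wt : ℝ) (hwr : 0 < wr) (hwt : 0 < wt)
    (hr : 2 * wt ≤ 3 * wr) :
    ∀ (l : List RearrOp) (π : ℕ → ℤ), SSorts n l π →
      wt * (bS n π : ℝ) ≤ 3 * rCost wr wt l := by
  intro l
  induction l with
  | nil =>
    intro π h
    rw [bS_id n π h]
    simp [rCost_nil]
  | cons op l ih =>
    intro π h
    obtain ⟨π₁, hop, hs⟩ := h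
    have ihb := ih π₁ hs
    cases op with
    | rev =>
      obtain ⟨i, j, hi, hij, hj, h1, h2⟩ := hop
      have hb : bS n π ≤ bS n π₁ + 2 := by
        have := rev_bS n π π₁ i j hi hij hj h1 h2 ∅ (by simp) (by simp)
        simpa using this
      have hb' : (bS n π : ℝ) ≤ (bS n π₁ : ℝ) + 2 := by exact_mod_cast hb
      have hcost : rCost wr wt (RearrOp.rev :: l) = wr + rCost wr wt l := by
        rw [rCost_cons]; norm_num
      rw [hcost]
      have := mul_le_mul_of_nonneg_left hb' hwt.le
      linarith
    | transp =>
      obtain ⟨i, j, k, hi, hij, hjk, hk, hA, hB, hC⟩ := hop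
      have hb : bS n π ≤ bS n π₁ + 3 := transp_bS n π π₁ i j k hi hij hjk hk hA hB hC
      have hb' : (bS n π : ℝ) ≤ (bS n π₁ : ℝ) + 3 := by exact_mod_cast hb
      rw [rCost_cons]
      have hne : (RearrOp.transp : RearrOp) ≠ RearrOp.rev := by simp
      simp only [if_neg hne]
      have := mul_le_mul_of_nonneg_left hb' hwt.le
      linarith
    | invtransp =>
      obtain ⟨i, j, k, hi, hij, hjk, hk, hD, hC⟩ := hop
      have hb : bS n π ≤ bS n π₁ + 3 := by
        rcases hD with ⟨hA, hB⟩ | ⟨hA, hB⟩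
        · have := invtransp1_bS n π π₁ i j k hi hij hjk hk hA hB hC ∅ (by simp) (by simp)
          simpa using this
        · have := invtransp2_bS n π π₁ i j k hi hij hjk hk hA hB hC ∅ (by simp) (by simp)
          simpa using this
      have hb' : (bS n π : ℝ) ≤ (bS n π₁ : ℝ) + 3 := by exact_mod_cast hb
      rw [rCost_cons]
      have hne : (RearrOp.invtransp : RearrOp) ≠ RearrOp.rev := by simp
      simp only [if_neg hne]
      have := mul_le_mul_of_nonneg_left hb' hwt.le
      linarith
    | revrev =>
      obtain ⟨i, j, k, hi, hij, hjk, hk, hA, hB, hC⟩ := hop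
      have hb : bS n π ≤ bS n π₁ + 3 := by
        have := revrev_bS n π π₁ i j k hi hij hjk hk hA hB hC ∅ (by simp) (by simp)
        simpa using this
      have hb' : (bS n π : ℝ) ≤ (bS n π₁ : ℝ) + 3 := by exact_mod_cast hb
      rw [rCost_cons]
      have hne : (RearrOp.revrev : RearrOp) ≠ RearrOp.rev := by simp
      simp only [if_neg hne]
      have := mul_le_mul_of_nonneg_left hb' hwt.le
      linarith

/-- Main structural lemma: a cheap sorting sequence of an all-positive permutation
consists of transpositions, each removing exactly 3 transposition breakpoints. -/
lemma main_struct (n : ℕ) (wr wt : ℝ) (hwr : 0 < wr) (hwt : 0 < wt)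
    (hr : 2 * wt ≤ 3 * wr) :
    ∀ (l : List RearrOp) (π : ℕ → ℕ),
      π 0 = 0 → π (n+1) = n+1 → (∀ q, 1 ≤ q → q ≤ n → 1 ≤ π q) →
      SSorts n l (fun p => ((π p : ℕ) : ℤ)) →
      3 * rCost wr wt l < wt * (bTU n π : ℝ) + min wt (3 * wr) →
      UTranspSorts n l.length π ∧ 3 * l.length = bTU n π ∧
        rCost wr wt l = wt * (l.length : ℝ) := by
  intro l
  induction l with
  | nil =>
    intro π h0 hn1 hpos hs hlt
    have hid : ∀ p, p ≤ n + 1 → π p = p := by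
      intro p hp
      have h' : ((π p : ℕ) : ℤ) = (p : ℤ) := hs p hp
      exact_mod_cast h'
    have hb : bTU n π = 0 := by
      unfold bTU
      rw [Finset.card_eq_zero, Finset.filter_eq_empty_iff]
      intro x hx
      simp only [Finset.mem_range] at hx
      rw [hid x (by omega), hid (x+1) (by omega)]
      simp
    refine ⟨hid, by simp [hb], by simp [rCost_nil]⟩
  | cons op l ih =>
    intro π h0 hn1 hpos hs hlt
    obtain ⟨σ₁, hop, hs'⟩ := hs
    have hone : ∀ q, 1 ≤ q → q ≤ n + 1 → (1 : ℤ) ≤ (π q : ℤ) := by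
      intro q hq1 hq2
      rcases Nat.lt_or_ge q (n+1) with hlt' | hge
      · exact_mod_cast hpos q hq1 (by omega)
      · have : q = n + 1 := by omega
        rw [this, hn1]
        exact_mod_cast Nat.one_le_iff_ne_zero.mpr (by omega)
    have hnn0 : ∀ p, (0 : ℤ) ≤ (π p : ℤ) := fun p => Int.natCast_nonneg _
    have hbcast : bS n (fun p => ((π p : ℕ) : ℤ)) = bTU n π := bS_cast n π
    cases op with
    | transp =>
      obtain ⟨i, j, k, hi, hij, hjk, hk, hA, hB, hC⟩ := hop
      have hnn : ∀ p, 0 ≤ σ₁ p := by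
        intro p
        by_cases hpi : p < i
        · rw [hC p (Or.inl hpi)]; exact hnn0 p
        · by_cases hpk : k ≤ p
          · rw [hC p (Or.inr hpk)]; exact hnn0 p
          · push_neg at hpi hpk
            by_cases hpm : p < i + (k - j)
            · rw [hA p hpi hpm]; exact hnn0 _
            · push_neg at hpm
              rw [hB p hpm hpk]; exact hnn0 _
      set π₁ : ℕ → ℕ := fun p => (σ₁ p).toNat with hπ₁def
      have hcast : (fun p => ((π₁ p : ℕ) : ℤ)) = σ₁ :=
        funext fun p => Int.toNat_of_nonneg (hnn p)
      have hA' : ∀ p, i ≤ p → p < i + (k - j) → π₁ p = π (p + (j - i)) := by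
        intro p h1 h2
        have := hA p h1 h2
        simp only [hπ₁def, this, Int.toNat_natCast]
      have hB' : ∀ p, i + (k - j) ≤ p → p < k → π₁ p = π (p - (k - j)) := by
        intro p h1 h2
        have := hB p h1 h2
        simp only [hπ₁def, this, Int.toNat_natCast]
      have hC' : ∀ p, p < i ∨ k ≤ p → π₁ p = π p := by
        intro p h1
        have := hC p h1
        simp only [hπ₁def, this, Int.toNat_natCast]
      have hUT : UTransp n π π₁ := ⟨i, j, k, hi, hij, hjk, hk, hA', hB', hC'⟩
      have h0' : π₁ 0 = 0 := by rw [hC' 0 (Or.inl (by omega))]; exact h0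
      have hn1' : π₁ (n+1) = n+1 := by rw [hC' (n+1) (Or.inr hk)]; exact hn1
      have hpos' : ∀ q, 1 ≤ q → q ≤ n → 1 ≤ π₁ q := by
        intro q h1 h2
        by_cases hqi : q < i
        · rw [hC' q (Or.inl hqi)]; exact hpos q h1 h2
        · by_cases hqk : k ≤ q
          · rw [hC' q (Or.inr hqk)]; exact hpos q h1 h2
          · push_neg at hqi hqk
            by_cases hqm : q < i + (k - j)
            · rw [hA' q hqi hqm]; exact hpos _ (by omega) (by omega)
            · push_neg at hqm
              rw [hB' q hqm hqk]; exact hpos _ (by omega) (by omega)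
      have hbS1 : bS n σ₁ = bTU n π₁ := by rw [← hcast, bS_cast]
      have hb3 : bTU n π ≤ bTU n π₁ + 3 := by
        have := transp_bS n (fun p => ((π p : ℕ) : ℤ)) σ₁ i j k hi hij hjk hk hA hB hC
        rw [hbcast, hbS1] at this
        exact this
      have hs'' : SSorts n l (fun p => ((π₁ p : ℕ) : ℤ)) := by rw [hcast]; exact hs'
      have hcost : rCost wr wt (RearrOp.transp :: l) = wt + rCost wr wt l := by
        rw [rCost_cons]; simp
      have hcb : (bTU n π : ℝ) ≤ (bTU n π₁ : ℝ) + 3 := by exact_mod_cast hb3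
      have hmin1 : min wt (3 * wr) ≤ wt := min_le_left _ _
      have hlt' : 3 * rCost wr wt l < wt * (bTU n π₁ : ℝ) + min wt (3 * wr) := by
        rw [hcost] at hlt
        have := mul_le_mul_of_nonneg_left hcb hwt.le
        linarith
      obtain ⟨hsort, hlen, hcosteq⟩ := ih π₁ h0' hn1' hpos' hs'' hlt'
      have h3c : 3 * rCost wr wt l = wt * (bTU n π₁ : ℝ) := by
        rw [hcosteq, ← hlen]
        push_cast
        ring
      have hstrict : (bTU n π₁ : ℝ) + 2 < (bTU n π : ℝ) := by
        rw [hcost] at hlt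
        have h' : wt * ((bTU n π₁ : ℝ) + 2) < wt * (bTU n π : ℝ) := by linarith
        exact lt_of_mul_lt_mul_left (by linarith) hwt.le
      have hble : bTU n π₁ + 3 ≤ bTU n π := by
        have : bTU n π₁ + 2 < bTU n π := by exact_mod_cast hstrict
        omega
      have hbeq : bTU n π = bTU n π₁ + 3 := by omega
      refine ⟨⟨π₁, hUT, hsort⟩, ?_, ?_⟩
      · simp only [List.length_cons]
        omega
      · rw [hcost, hcosteq]
        simp only [List.length_cons]
        push_cast
        ring
    | rev =>
      exfalso
      obtain ⟨i, j, hi, hij, hj, h1, h2⟩ := hop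
      have hb1 : σ₁ ((i-1) + 1) - σ₁ (i-1) ≠ 1 := by
        have hi1 : i - 1 + 1 = i := by omega
        rw [hi1, h1 i le_rfl hij, h2 (i-1) (Or.inl (by omega))]
        have hx : i + j - i = j := by omega
        rw [hx]
        have hpj : (1 : ℤ) ≤ (π j : ℤ) := hone j (by omega) (by omega)
        have hpn : (0 : ℤ) ≤ (π (i-1) : ℤ) := hnn0 _
        intro hcon
        simp only at hcon
        linarith
      have hb2 : σ₁ (j + 1) - σ₁ j ≠ 1 := by
        rw [h2 (j+1) (Or.inr (by omega)), h1 j hij le_rfl]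
        have hx : i + j - j = i := by omega
        rw [hx]
        have hpi : (1 : ℤ) ≤ (π i : ℤ) := hone i hi (by omega)
        have hpj1 : (1 : ℤ) ≤ (π (j+1) : ℤ) := hone (j+1) (by omega) (by omega)
        intro hcon
        simp only at hcon
        linarith
      have hFcard : ({i-1, j} : Finset ℕ).card = 2 := by
        rw [Finset.card_insert_of_notMem (by simp; omega), Finset.card_singleton]
      have hkey := rev_bS n (fun p => ((π p : ℕ) : ℤ)) σ₁ i j hi hij hj h1 h2
          {i-1, j} (subset_refl _) ?_
      · rw [hbcast, hFcard] at hkey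
        have hLB := cost_lower_bound n wr wt hwr hwt hr l σ₁ hs'
        have hcost : rCost wr wt (RearrOp.rev :: l) = wr + rCost wr wt l := by
          rw [rCost_cons]; simp
        rw [hcost] at hlt
        have hmin : min wt (3 * wr) ≤ 3 * wr := min_le_right _ _
        have hcb : (bTU n π : ℝ) ≤ (bS n σ₁ : ℝ) := by
          exact_mod_cast (by omega : bTU n π ≤ bS n σ₁)
        have := mul_le_mul_of_nonneg_left hcb hwt.le
        linarith
      · intro e he
        simp only [Finset.mem_insert, Finset.mem_singleton] at he
        rcases he with rfl | rfl
        · exact hb1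
        · exact hb2
    | invtransp =>
      exfalso
      obtain ⟨i, j, k, hi, hij, hjk, hk, hD, hC⟩ := hop
      have hLB := cost_lower_bound n wr wt hwr hwt hr l σ₁ hs'
      have hcost : rCost wr wt (RearrOp.invtransp :: l) = wt + rCost wr wt l := by
        rw [rCost_cons]; simp
      rw [hcost] at hlt
      have hmin : min wt (3 * wr) ≤ wt := min_le_left _ _
      have hkey : bTU n π + 1 ≤ bS n σ₁ + 3 := by
        rcases hD with ⟨hA, hB⟩ | ⟨hA, hB⟩
        · -- type 1 : breakpoint at i + (k-j) - 1
          have hbp : σ₁ ((i + (k-j) - 1) + 1) - σ₁ (i + (k-j) - 1) ≠ 1 := by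
            have hm1 : i + (k-j) - 1 + 1 = i + (k-j) := by omega
            rw [hm1]
            have e1 : σ₁ (i + (k-j) - 1) = ((π (k-1) : ℕ) : ℤ) := by
              have := hA (i + (k-j) - 1) (by omega) (by omega)
              rw [this]
              have hy : i + (k-j) - 1 + (j - i) = k - 1 := by omega
              simp only [hy]
            have e2 : σ₁ (i + (k-j)) = - ((π (j-1) : ℕ) : ℤ) := by
              have := hB (i + (k-j)) le_rfl (by omega)
              rw [this]
              have hy : i + k - 1 - (i + (k-j)) = j - 1 := by omega
              simp only [hy]
            rw [e1, e2]
            have hp1 : (1 : ℤ) ≤ (π (j-1) : ℤ) := hone (j-1) (by omega) (by omega)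
            have hp2 : (1 : ℤ) ≤ (π (k-1) : ℤ) := hone (k-1) (by omega) (by omega)
            intro hcon
            linarith
          have := invtransp1_bS n (fun p => ((π p : ℕ) : ℤ)) σ₁ i j k hi hij hjk hk hA hB hC
              {i + (k-j) - 1} (subset_refl _) ?_
          · rw [hbcast, Finset.card_singleton] at this
            exact this
          · intro e he
            simp only [Finset.mem_singleton] at he
            subst he
            exact hbp
        · -- type 2 : breakpoint at i - 1
          have hbp : σ₁ ((i-1) + 1) - σ₁ (i-1) ≠ 1 := by
            have hi1 : i - 1 + 1 = i := by omega
            rw [hi1]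
            have e1 : σ₁ (i-1) = ((π (i-1) : ℕ) : ℤ) := hC (i-1) (Or.inl (by omega))
            have e2 : σ₁ i = - ((π (k-1) : ℕ) : ℤ) := by
              have := hA i le_rfl (by omega)
              rw [this]
              have hy : i + k - 1 - i = k - 1 := by omega
              simp only [hy]
            rw [e1, e2]
            have hp1 : (1 : ℤ) ≤ (π (k-1) : ℤ) := hone (k-1) (by omega) (by omega)
            have hp2 : (0 : ℤ) ≤ (π (i-1) : ℤ) := hnn0 _
            intro hcon
            linarith
          have := invtransp2_bS n (fun p => ((π p : ℕ) : ℤ)) σ₁ i j k hi hij hjk hk hA hB hC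
              {i - 1} (subset_refl _) ?_
          · rw [hbcast, Finset.card_singleton] at this
            exact this
          · intro e he
            simp only [Finset.mem_singleton] at he
            subst he
            exact hbp
      have hcb : (bTU n π : ℝ) ≤ (bS n σ₁ : ℝ) + 2 := by
        exact_mod_cast (by omega : bTU n π ≤ bS n σ₁ + 2)
      have := mul_le_mul_of_nonneg_left hcb hwt.le
      linarith
    | revrev =>
      exfalso
      obtain ⟨i, j, k, hi, hij, hjk, hk, hA, hB, hC⟩ := hop
      have hLB := cost_lower_bound n wr wt hwr hwt hr l σ₁ hs'
      have hcost : rCost wr wt (RearrOp.revrev :: l) = wt + rCost wr wt l := by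
        rw [rCost_cons]; simp
      rw [hcost] at hlt
      have hmin : min wt (3 * wr) ≤ wt := min_le_left _ _
      have hbp : σ₁ ((i-1) + 1) - σ₁ (i-1) ≠ 1 := by
        have hi1 : i - 1 + 1 = i := by omega
        rw [hi1]
        have e1 : σ₁ (i-1) = ((π (i-1) : ℕ) : ℤ) := hC (i-1) (Or.inl (by omega))
        have e2 : σ₁ i = - ((π (j-1) : ℕ) : ℤ) := by
          have := hA i le_rfl (by omega)
          rw [this]
          have hy : i + j - 1 - i = j - 1 := by omega
          simp only [hy]
        rw [e1, e2]
        have hp1 : (1 : ℤ) ≤ (π (j-1) : ℤ) := hone (j-1) (by omega) (by omega)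
        have hp2 : (0 : ℤ) ≤ (π (i-1) : ℤ) := hnn0 _
        intro hcon
        linarith
      have hkey := revrev_bS n (fun p => ((π p : ℕ) : ℤ)) σ₁ i j k hi hij hjk hk hA hB hC
          {i - 1} (subset_refl _) ?_
      · rw [hbcast, Finset.card_singleton] at hkey
        have hcb : (bTU n π : ℝ) ≤ (bS n σ₁ : ℝ) + 2 := by
          exact_mod_cast (by omega : bTU n π ≤ bS n σ₁ + 2)
        have := mul_le_mul_of_nonneg_left hcb hwt.le
        linarith
      · intro e he
        simp only [Finset.mem_singleton] at he
        subst he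
        exact hbp

lemma lift_sorts (n : ℕ) : ∀ (s : ℕ) (π : ℕ → ℕ), UTranspSorts n s π →
    SSorts n (List.replicate s RearrOp.transp) (fun p => ((π p : ℕ) : ℤ)) := by
  intro s
  induction s with
  | zero =>
    intro π h p hp
    show ((π p : ℕ) : ℤ) = (p : ℤ)
    rw [h p hp]
  | succ s ih =>
    intro π h
    obtain ⟨π₁, hT, hrest⟩ := h
    refine ⟨(fun p => ((π₁ p : ℕ) : ℤ)), ?_, ih π₁ hrest⟩
    obtain ⟨i, j, k, h1, h2, h3, h4, hA, hB, hC⟩ := hT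
    refine ⟨i, j, k, h1, h2, h3, h4, ?_, ?_, ?_⟩
    · intro p hp hp'
      show ((π₁ p : ℕ) : ℤ) = ((π (p + (j - i)) : ℕ) : ℤ)
      exact_mod_cast hA p hp hp'
    · intro p hp hp'
      show ((π₁ p : ℕ) : ℤ) = ((π (p - (k - j)) : ℕ) : ℤ)
      exact_mod_cast hB p hp hp'
    · intro p hp
      show ((π₁ p : ℕ) : ℤ) = ((π p : ℕ) : ℤ)
      exact_mod_cast hC p hp

lemma rCost_replicate (wr wt : ℝ) (s : ℕ) :
    rCost wr wt (List.replicate s RearrOp.transp) = s * wt := by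
  induction s with
  | zero => simp [rCost_nil]
  | succ s ih =>
    rw [List.replicate_succ, rCost_cons, ih]
    simp
    ring

end Aux

/-- Let `π` be an unsigned permutation of size `n` with `b_τ(π)`
transposition breakpoints, let `π'` be the signed permutation obtained by giving every
element of `π` the sign `+`, and let `w_ρ, w_τ` be positive weights with
`w_τ/w_ρ ≤ 3/2`. Then there exists a sequence `S` of transpositions transforming `π`
into the identity with `3·|S| = b_τ(π)` if and only if
`3·d^w_{M6}(π') ≤ w_τ · b_τ(π)`. -/
theorem transposition_sorting_iff_weighted_signed_distance
    (n : ℕ) (π : ℕ → ℕ) (hπ : IsUPerm n π)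
    (wr wt : ℝ) (hwr : 0 < wr) (hwt : 0 < wt) (hratio : wt / wr ≤ 3 / 2) :
    (∃ s : ℕ, UTranspSorts n s π ∧ 3 * s = bTU n π) ↔
      3 * sWDist n M6 wr wt (fun p => (π p : ℤ)) ≤
        ENNReal.ofReal (wt * (bTU n π : ℝ)) := by
  obtain ⟨h0, hn1, hval, hinj⟩ := hπ
  have hpos : ∀ q, 1 ≤ q → q ≤ n → 1 ≤ π q := fun q h1 h2 => (hval q h1 h2).1
  have hr : 2 * wt ≤ 3 * wr := by
    rw [div_le_div_iff₀ hwr (by norm_num)] at hratio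
    linarith
  set b := bTU n π with hbdef
  constructor
  · rintro ⟨s, hsort, hlen⟩
    have hss := lift_sorts n s π hsort
    have hmem : seqCost wr wt (List.replicate s RearrOp.transp) ∈
        {c : ENNReal | ∃ l : List RearrOp, (∀ op ∈ l, op ∈ M6) ∧
          SSorts n l (fun p => ((π p : ℕ) : ℤ)) ∧ c = seqCost wr wt l} := by
      refine ⟨List.replicate s RearrOp.transp, ?_, hss, rfl⟩
      intro op hop
      rw [List.eq_of_mem_replicate hop]
      simp [M6]
    have hle : sWDist n M6 wr wt (fun p => ((π p : ℕ) : ℤ)) ≤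
        seqCost wr wt (List.replicate s RearrOp.transp) := sInf_le hmem
    have hcost : seqCost wr wt (List.replicate s RearrOp.transp)
        = ENNReal.ofReal ((s : ℝ) * wt) := by
      rw [seqCost_eq_ofReal wr wt hwr.le hwt.le, rCost_replicate]
    calc 3 * sWDist n M6 wr wt (fun p => ((π p : ℕ) : ℤ))
        ≤ 3 * ENNReal.ofReal ((s : ℝ) * wt) := by
          rw [← hcost]; exact mul_le_mul_right hle 3
      _ = ENNReal.ofReal (wt * (b : ℝ)) := by
          rw [show (3 : ENNReal) = ENNReal.ofReal 3 from (ENNReal.ofReal_ofNat 3).symm,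
            ← ENNReal.ofReal_mul (by norm_num : (0:ℝ) ≤ 3)]
          congr 1
          have hb3 : (b : ℝ) = 3 * (s : ℝ) := by exact_mod_cast hlen.symm
          rw [hb3]
          ring
  · intro H
    set ε := min wt (3 * wr) with hεdef
    have hεpos : 0 < ε := lt_min hwt (by linarith)
    have hbnn : (0:ℝ) ≤ (b : ℝ) := Nat.cast_nonneg _
    -- lower bound for every element of the cost set
    have hlow : ∀ c ∈ {c : ENNReal | ∃ l : List RearrOp, (∀ op ∈ l, op ∈ M6) ∧
        SSorts n l (fun p => ((π p : ℕ) : ℤ)) ∧ c = seqCost wr wt l},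
        ENNReal.ofReal (wt * (b : ℝ) / 3) ≤ c := by
      rintro c ⟨l, hM, hsorts, rfl⟩
      rw [seqCost_eq_ofReal wr wt hwr.le hwt.le]
      apply ENNReal.ofReal_le_ofReal
      have := cost_lower_bound n wr wt hwr hwt hr l _ hsorts
      rw [bS_cast] at this
      linarith
    have hd_ge : ENNReal.ofReal (wt * (b : ℝ) / 3) ≤
        sWDist n M6 wr wt (fun p => ((π p : ℕ) : ℤ)) := le_sInf hlow
    have h3 : (3 : ENNReal) ≠ 0 := by norm_num
    have h3t : (3 : ENNReal) ≠ ⊤ := by norm_num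
    have hd_le : sWDist n M6 wr wt (fun p => ((π p : ℕ) : ℤ)) ≤
        ENNReal.ofReal (wt * (b : ℝ) / 3) := by
      have hsplit : ENNReal.ofReal (wt * (b : ℝ)) =
          3 * ENNReal.ofReal (wt * (b : ℝ) / 3) := by
        rw [show (3 : ENNReal) = ENNReal.ofReal 3 from (ENNReal.ofReal_ofNat 3).symm,
          ← ENNReal.ofReal_mul (by norm_num : (0:ℝ) ≤ 3)]
        congr 1
        ring
      rw [hsplit] at H
      exact (ENNReal.mul_le_mul_iff_right h3 h3t).mp H
    have hlt : sWDist n M6 wr wt (fun p => ((π p : ℕ) : ℤ)) <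
        ENNReal.ofReal ((wt * (b : ℝ) + ε) / 3) := by
      apply lt_of_le_of_lt hd_le
      rw [ENNReal.ofReal_lt_ofReal_iff (by positivity)]
      linarith
    unfold sWDist at hlt
    obtain ⟨c, hcmem, hclt⟩ := sInf_lt_iff.mp hlt
    obtain ⟨l, hM, hsorts, rfl⟩ := hcmem
    rw [seqCost_eq_ofReal wr wt hwr.le hwt.le] at hclt
    have hrc : rCost wr wt l < (wt * (b : ℝ) + ε) / 3 := by
      rw [ENNReal.ofReal_lt_ofReal_iff_of_nonneg (rCost_nonneg wr wt hwr.le hwt.le l)] at hclt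
      exact hclt
    have hlt3 : 3 * rCost wr wt l < wt * (b : ℝ) + min wt (3 * wr) := by
      rw [← hεdef]
      linarith
    obtain ⟨hsort, hlen, _⟩ := main_struct n wr wt hwr hwt hr l π h0 hn1 hpos hsorts hlt3
    exact ⟨l.length, hsort, hlen⟩
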